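/- Let X be a barrelled locally convex topological vector space over ℝ and let (T_t)_{t≥0} be a strongly continuous semigroup on X whose generator is everywhere defined, i.e., for every x ∈ X the limit lim_{h→0⁺} (T_h x − x)/h exists in X. Then the family {h⁻¹(T_h − id) : h ∈ (0,1]} is equicontinuous, and the semigroup is uniformly continuous: T_h → id uniformly on every (von Neumann) bounded subset of X as h → 0⁺. -/

import Mathlib

open Filter Topology Set
open scoped Pointwise

/-- On a barrelled locally convex space, a strongly continuous
semigroup whose generator is everywhere defined has
`{h⁻¹(T_h − id) : h ∈ (0,1]}` equicontinuous and is uniformly continuous: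
`T_h → id` uniformly on every von Neumann bounded set as `h → 0⁺`. -/
theorem stmt1 {X : Type*} [AddCommGroup X] [Module ℝ X] [UniformSpace X]
    [IsUniformAddGroup X] [ContinuousSMul ℝ X] [LocallyConvexSpace ℝ X]
    [BarrelledSpace ℝ X]
    (T : ℝ → X →L[ℝ] X)
    (hT0 : T 0 = ContinuousLinearMap.id ℝ X)
    (hTadd : ∀ s t : ℝ, 0 ≤ s → 0 ≤ t → T (s + t) = (T s).comp (T t))
    (horbit : ∀ x : X, ContinuousOn (fun t : ℝ => T t x) (Set.Ici 0))
    (hgen : ∀ x : X, ∃ y : X,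
      Tendsto (fun h : ℝ => h⁻¹ • (T h x - x)) (𝓝[>] 0) (𝓝 y)) :
    Equicontinuous (fun h : Set.Ioc (0 : ℝ) 1 => fun x : X =>
        (h : ℝ)⁻¹ • (T h x - x)) ∧
    ∀ B : Set X, Bornology.IsVonNBounded ℝ B →
      TendstoUniformlyOn (fun (h : ℝ) (x : X) => T h x) (fun x => x) (𝓝[>] 0) B := by
  classical
  set q := gaugeSeminormFamily ℝ X
  have hq : WithSeminorms q := with_gaugeSeminormFamily
  -- the bundled operators
  set S : Set.Ioc (0 : ℝ) 1 → X →L[ℝ] X :=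
    fun h => (h : ℝ)⁻¹ • (T h - ContinuousLinearMap.id ℝ X) with hS
  have hSapp : ∀ (h : Set.Ioc (0:ℝ) 1) (x : X), S h x = (h : ℝ)⁻¹ • (T h x - x) := by
    intro h x; simp [hS]
  -- pointwise boundedness
  have hbdd : ∀ x : X, Bornology.IsVonNBounded ℝ
      (Set.range fun h : Set.Ioc (0:ℝ) 1 => (h : ℝ)⁻¹ • (T h x - x)) := by
    intro x
    obtain ⟨y, hy⟩ := hgen x
    set g : ℝ → X := fun h => if h = 0 then y else h⁻¹ • (T h x - x) with hg
    have hgc : ContinuousOn g (Set.Icc 0 1) := by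
      intro t ht
      rcases eq_or_lt_of_le ht.1 with h0 | h0
      · -- t = 0
        subst h0
        have : Tendsto g (𝓝[Set.Icc (0:ℝ) 1] 0) (𝓝 y) := by
          have hle : 𝓝[Set.Icc (0:ℝ) 1] (0:ℝ) ≤ 𝓝[Set.Ici 0] 0 :=
            nhdsWithin_mono _ Set.Icc_subset_Ici_self
          refine Tendsto.mono_left ?_ hle
          have : 𝓝[Set.Ici (0:ℝ)] (0:ℝ) = 𝓝[{0}] 0 ⊔ 𝓝[Set.Ioi 0] 0 := by
            rw [← nhdsWithin_union]
            congr 1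
            ext z; simp [le_iff_lt_or_eq, eq_comm, or_comm]
          rw [this]
          refine Tendsto.sup ?_ ?_
          · rw [nhdsWithin_singleton]
            simpa [hg] using tendsto_pure_nhds g 0 |>.congr (fun _ => rfl) |>.mono_right le_rfl
          · refine hy.congr' ?_
            filter_upwards [self_mem_nhdsWithin] with z hz
            rw [hg]; simp [ne_of_gt (Set.mem_Ioi.mp hz)]
        simpa [ContinuousWithinAt, hg] using this
      · -- t > 0
        have hform : ContinuousWithinAt (fun h : ℝ => h⁻¹ • (T h x - x)) (Set.Icc 0 1) t := by
          refine ContinuousWithinAt.smul ?_ ?_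
          · exact (continuousAt_inv₀ (ne_of_gt h0)).continuousWithinAt
          · exact ((horbit x t (le_of_lt h0)).mono Set.Icc_subset_Ici_self).sub
              continuousWithinAt_const
        refine hform.congr_of_eventuallyEq ?_ ?_
        · filter_upwards [nhdsWithin_le_nhds (Ioi_mem_nhds h0 : Set.Ioi (0:ℝ) ∈ 𝓝 t)] with z hz
          rw [hg]; simp [ne_of_gt (Set.mem_Ioi.mp hz)]
        · rw [hg]; simp [ne_of_gt h0]
    have hK : IsCompact (g '' Set.Icc 0 1) := (isCompact_Icc).image_of_continuousOn hgc
    refine (hK.totallyBounded.isVonNBounded ℝ).subset ?_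
    rintro _ ⟨h, rfl⟩
    exact ⟨h, ⟨le_of_lt h.2.1, h.2.2⟩, by rw [hg]; simp [ne_of_gt h.2.1]⟩
  have hpt : ∀ k x, BddAbove (Set.range fun i : Set.Ioc (0:ℝ) 1 => q k (S i x)) := by
    intro k x
    obtain ⟨r, hr⟩ := (hq.isVonNBounded_iff_seminorm_bounded).mp (hbdd x) k
    refine ⟨r, ?_⟩
    rintro _ ⟨i, rfl⟩
    exact le_of_lt (by simpa [hSapp] using hr.2 _ ⟨i, rfl⟩)
  have hequi : UniformEquicontinuous ((↑) ∘ S) := hq.banach_steinhaus hpt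
  have hequi' : Equicontinuous fun h : Set.Ioc (0:ℝ) 1 => fun x : X =>
      (h : ℝ)⁻¹ • (T h x - x) := by
    have heq : (fun h : Set.Ioc (0:ℝ) 1 => fun x : X => (h : ℝ)⁻¹ • (T h x - x))
        = (↑) ∘ S := by
      funext h x; simp [hS]
    rw [heq]
    exact hequi.equicontinuous
  refine ⟨hequi', ?_⟩
  intro B hB
  intro u hu
  rw [uniformity_eq_comap_nhds_zero X] at hu
  obtain ⟨W, hW, hWu⟩ := hu
  -- choose a balanced neighborhood inside W
  obtain ⟨W', ⟨hW'0, hW'bal⟩, hW'W⟩ := (nhds_basis_balanced ℝ X).mem_iff.mp hW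
  -- equicontinuity at 0
  have h0 := hequi' 0
  rw [equicontinuousAt_iff_pair] at h0
  have hW'ent : (fun p : X × X => p.2 - p.1) ⁻¹' W' ∈ uniformity X := by
    rw [uniformity_eq_comap_nhds_zero X]
    exact preimage_mem_comap hW'0
  obtain ⟨U, hU0, hU⟩ := h0 _ hW'ent
  have hU' : U ∈ 𝓝 (0 : X) := hU0
  -- absorb B by U
  obtain ⟨c, hc1, hcB⟩ : ∃ c : ℝ, 1 ≤ ‖c‖ ∧ B ⊆ (c • U : Set X) :=
    ((tendsto_norm_cobounded_atTop.eventually_ge_atTop 1).and (hB hU')).exists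
  have hc0 : c ≠ 0 := by intro h; rw [h] at hc1; norm_num at hc1
  -- eventually h is small
  have hev : Set.Ioc (0:ℝ) (min 1 ‖c‖⁻¹) ∈ 𝓝[>] (0:ℝ) :=
    Ioc_mem_nhdsGT_of_mem ⟨le_rfl, lt_min one_pos (by positivity)⟩
  filter_upwards [hev] with h hh x hx
  apply hWu
  apply hW'W
  show (fun p : X × X => p.2 - p.1) (x, T h x) ∈ W'
  have hh1 : h ∈ Set.Ioc (0:ℝ) 1 := ⟨hh.1, hh.2.trans (min_le_left _ _)⟩
  obtain ⟨v, hv, rfl⟩ : ∃ v ∈ U, c • v = x := hcB hx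
  have key : T h (c • v) - c • v = (h * c) • (S ⟨h, hh1⟩ v) := by
    have : S ⟨h, hh1⟩ (c • v) = h⁻¹ • (T h (c • v) - c • v) := hSapp _ _
    have h2 : c • S ⟨h, hh1⟩ v = h⁻¹ • (T h (c • v) - c • v) := by
      rw [← this, map_smul]
    calc T h (c • v) - c • v = h • h⁻¹ • (T h (c • v) - c • v) := by
          rw [smul_inv_smul₀ (ne_of_gt hh.1)]
      _ = h • c • S ⟨h, hh1⟩ v := by rw [h2]
      _ = (h * c) • S ⟨h, hh1⟩ v := (mul_smul h c _).symm
  show T h (c • v) - c • v ∈ W'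
  rw [key]
  refine hW'bal.smul_mem ?_ ?_
  · rw [norm_mul]
    calc ‖h‖ * ‖c‖ = h * ‖c‖ := by rw [Real.norm_of_nonneg (le_of_lt hh.1)]
      _ ≤ ‖c‖⁻¹ * ‖c‖ := by
          apply mul_le_mul_of_nonneg_right (hh.2.trans (min_le_right _ _)) (norm_nonneg c)
      _ = 1 := inv_mul_cancel₀ (by simpa using hc0)
  · -- S ⟨h,_⟩ v ∈ W'
    have h2 := hU (0 : X) (mem_of_mem_nhds hU0) v hv ⟨h, hh1⟩
    have : (h:ℝ)⁻¹ • (T h v - v) - (h:ℝ)⁻¹ • (T h (0:X) - 0) ∈ W' := h2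
    rw [hSapp]
    simpa using this
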